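/- arXiv:2103.03603 — 2 statements merged into one kernel-verified Lean document; each statement's English description precedes it below -/
import Mathlib

section
/- For a nonzero GEDM D built from the generalized Laplacian L: if D is a circum GEDM then rank(D) = rank(L) + 1; otherwise rank(D) = rank(L) + 2. -/
open Matrix

/-- `Dp` is the Moore-Penrose inverse of `D`. -/
def IsMoorePenrose {n : ℕ} (D Dp : Matrix (Fin n) (Fin n) ℝ) : Prop :=
  D * Dp * D = D ∧ Dp * D * Dp = Dp ∧ (D * Dp)ᵀ = D * Dp ∧ (Dp * D)ᵀ = Dp * D

lemma mp_unique {n : ℕ} {D P Q : Matrix (Fin n) (Fin n) ℝ}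
    (hP : IsMoorePenrose D P) (hQ : IsMoorePenrose D Q) : P = Q := by
  obtain ⟨hP1, hP2, hP3, hP4⟩ := hP
  obtain ⟨hQ1, hQ2, hQ3, hQ4⟩ := hQ
  have hDP : D * P = D * Q := by
    calc D * P = (D * P)ᵀ := hP3.symm
      _ = ((D * Q * D) * P)ᵀ := by rw [hQ1]
      _ = ((D * Q) * (D * P))ᵀ := by rw [Matrix.mul_assoc (D * Q) D P]
      _ = (D * P)ᵀ * (D * Q)ᵀ := by rw [Matrix.transpose_mul]
      _ = (D * P) * (D * Q) := by rw [hP3, hQ3]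
      _ = (D * P * D) * Q := by rw [Matrix.mul_assoc (D * P) D Q]
      _ = D * Q := by rw [hP1]
  have hQD : Q * D = P * D := by
    calc Q * D = (Q * D)ᵀ := hQ4.symm
      _ = (Q * (D * P * D))ᵀ := by rw [hP1]
      _ = ((Q * D) * (P * D))ᵀ := by
          rw [show Q * (D * P * D) = (Q * D) * (P * D) by simp only [Matrix.mul_assoc]]
      _ = (P * D)ᵀ * (Q * D)ᵀ := by rw [Matrix.transpose_mul]
      _ = (P * D) * (Q * D) := by rw [hP4, hQ4]
      _ = P * (D * Q * D) := by simp only [Matrix.mul_assoc]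
      _ = P * D := by rw [hQ1]
  calc P = P * D * P := hP2.symm
    _ = P * (D * P) := by rw [Matrix.mul_assoc]
    _ = P * (D * Q) := by rw [hDP]
    _ = (P * D) * Q := by rw [Matrix.mul_assoc]
    _ = (Q * D) * Q := by rw [hQD]
    _ = Q := hQ2

lemma exists_inv {ι : Type} [Fintype ι] [DecidableEq ι] (M : Matrix ι ι ℝ)
    (h : ∀ v, M *ᵥ v = 0 → v = 0) : ∃ G, M * G = 1 ∧ G * M = 1 := by
  have hdet : M.det ≠ 0 := by
    intro h0
    obtain ⟨v, hv, hMv⟩ := (Matrix.exists_mulVec_eq_zero_iff).mpr h0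
    exact hv (h v hMv)
  exact ⟨M⁻¹, Matrix.mul_nonsing_inv M (isUnit_iff_ne_zero.mpr hdet), Matrix.nonsing_inv_mul M (isUnit_iff_ne_zero.mpr hdet)⟩

lemma gram_inv {n : ℕ} {ι : Type} [Fintype ι] [DecidableEq ι] (Y : Matrix (Fin n) ι ℝ)
    (h : ∀ v, Y *ᵥ v = 0 → v = 0) : ∃ G, (Yᵀ * Y) * G = 1 ∧ G * (Yᵀ * Y) = 1 := by
  apply exists_inv
  intro v hv
  apply h
  have h2 : (Y *ᵥ v) ⬝ᵥ (Y *ᵥ v) = 0 := by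
    have h3 : v ⬝ᵥ ((Yᵀ * Y) *ᵥ v) = 0 := by rw [hv, dotProduct_zero]
    rwa [← Matrix.mulVec_mulVec, Matrix.dotProduct_mulVec, Matrix.vecMul_transpose] at h3
  exact dotProduct_self_eq_zero.mp h2

lemma core {n : ℕ} {ι : Type} [Fintype ι] [DecidableEq ι]
    (Y : Matrix (Fin n) ι ℝ) (C E G : Matrix ι ι ℝ)
    (hCE : C * E = 1) (hG : (Yᵀ * Y) * G = 1) :
    (Y * C * Yᵀ).rank = Fintype.card ι ∧
    IsMoorePenrose (Y * C * Yᵀ) (Y * (G * E * G) * Yᵀ) ∧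
    ∀ e : ι → ℝ, Y *ᵥ e = (fun _ => (1:ℝ)) →
      (fun _ => (1:ℝ)) ⬝ᵥ ((Y * (G * E * G) * Yᵀ) *ᵥ (fun _ => (1:ℝ))) = e ⬝ᵥ (E *ᵥ e) := by
  have hEC : E * C = 1 := mul_eq_one_comm.mp hCE
  have hG' : G * (Yᵀ * Y) = 1 := mul_eq_one_comm.mp hG
  have hGT : Gᵀ = G := by
    have h1 : Gᵀ * (Yᵀ * Y) = 1 := by
      have h0 := congrArg Matrix.transpose hG
      rwa [Matrix.transpose_mul, Matrix.transpose_mul, Matrix.transpose_transpose,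
        Matrix.transpose_one] at h0
    calc Gᵀ = Gᵀ * ((Yᵀ * Y) * G) := by rw [hG, Matrix.mul_one]
      _ = (Gᵀ * (Yᵀ * Y)) * G := by simp only [Matrix.mul_assoc]
      _ = G := by rw [h1, Matrix.one_mul]
  have key : ∀ M N : Matrix ι ι ℝ, (Y * M * Yᵀ) * (Y * N * Yᵀ) = Y * (M * (Yᵀ * Y) * N) * Yᵀ := by
    intro M N; simp only [Matrix.mul_assoc]
  have hDDp : (Y * C * Yᵀ) * (Y * (G * E * G) * Yᵀ) = Y * G * Yᵀ := by
    have hinner : C * (Yᵀ * Y) * (G * E * G) = G := by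
      calc C * (Yᵀ * Y) * (G * E * G) = C * ((Yᵀ * Y) * G) * (E * G) := by
            simp only [Matrix.mul_assoc]
        _ = G := by rw [hG, Matrix.mul_one, ← Matrix.mul_assoc, hCE, Matrix.one_mul]
    rw [key, hinner]
  have hDpD : (Y * (G * E * G) * Yᵀ) * (Y * C * Yᵀ) = Y * G * Yᵀ := by
    have hinner : G * E * G * (Yᵀ * Y) * C = G := by
      calc G * E * G * (Yᵀ * Y) * C = G * E * (G * (Yᵀ * Y)) * C := by
            simp only [Matrix.mul_assoc]
        _ = G := by rw [hG', Matrix.mul_one, Matrix.mul_assoc, hEC, Matrix.mul_one]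
    rw [key, hinner]
  have hPsymm : (Y * G * Yᵀ)ᵀ = Y * G * Yᵀ := by
    rw [Matrix.transpose_mul, Matrix.transpose_mul, Matrix.transpose_transpose, hGT,
      Matrix.mul_assoc]
  refine ⟨?_, ⟨?_, ?_, ?_, ?_⟩, ?_⟩
  · -- rank
    have hCu : IsUnit C := ⟨⟨C, E, hCE, hEC⟩, rfl⟩
    have hYYu : IsUnit (Yᵀ * Y) := ⟨⟨Yᵀ * Y, G, hG, hG'⟩, rfl⟩
    have hunit : IsUnit ((Yᵀ * Y) * C * (Yᵀ * Y)) := (hYYu.mul hCu).mul hYYu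
    have heq : (Yᵀ * Y) * C * (Yᵀ * Y) = Yᵀ * ((Y * C * Yᵀ) * Y) := by
      simp only [Matrix.mul_assoc]
    have hlow : Fintype.card ι ≤ (Y * C * Yᵀ).rank := by
      have h1 := Matrix.rank_of_isUnit _ hunit
      rw [heq] at h1
      calc Fintype.card ι = (Yᵀ * ((Y * C * Yᵀ) * Y)).rank := h1.symm
        _ ≤ ((Y * C * Yᵀ) * Y).rank := Matrix.rank_mul_le_right _ _
        _ ≤ (Y * C * Yᵀ).rank := Matrix.rank_mul_le_left _ _
    have hhigh : (Y * C * Yᵀ).rank ≤ Fintype.card ι :=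
      (Matrix.rank_mul_le_right _ _).trans (Matrix.rank_le_card_height _)
    exact le_antisymm hhigh hlow
  · rw [hDDp]
    calc Y * G * Yᵀ * (Y * C * Yᵀ) = Y * (G * (Yᵀ * Y) * C) * Yᵀ := key G C
      _ = Y * C * Yᵀ := by rw [hG', Matrix.one_mul]
  · rw [hDpD]
    calc Y * G * Yᵀ * (Y * (G * E * G) * Yᵀ) = Y * (G * (Yᵀ * Y) * (G * E * G)) * Yᵀ := key _ _
      _ = Y * (G * E * G) * Yᵀ := by rw [hG', Matrix.one_mul]
  · rw [hDDp]; exact hPsymm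
  · rw [hDpD]; exact hPsymm
  · intro e he
    have hGe : G *ᵥ (Yᵀ *ᵥ (fun _ => (1:ℝ))) = e := by
      rw [← he, Matrix.mulVec_mulVec, Matrix.mulVec_mulVec, Matrix.mul_assoc, hG', Matrix.one_mulVec]
    have hnest : (Y * (G * E * G) * Yᵀ) *ᵥ (fun _ => (1:ℝ))
        = Y *ᵥ (G *ᵥ (E *ᵥ (G *ᵥ (Yᵀ *ᵥ (fun _ => (1:ℝ)))))) := by
      simp only [Matrix.mulVec_mulVec, Matrix.mul_assoc]
    rw [hnest, hGe]
    rw [Matrix.dotProduct_mulVec, ← Matrix.mulVec_transpose, Matrix.dotProduct_mulVec,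
      ← Matrix.mulVec_transpose, hGT, hGe]

section Defs
variable {n : ℕ} {κ : Type} [Fintype κ] [DecidableEq κ]

def Ymat2 (d : Fin n → ℝ) (X : Matrix (Fin n) κ ℝ) : Matrix (Fin n) (Unit ⊕ Unit ⊕ κ) ℝ :=
  Matrix.of fun i => Sum.elim (fun _ : Unit => d i)
    (Sum.elim (fun _ : Unit => (1:ℝ)) (fun j : κ => X i j))

def Cmat2 (a b c : ℝ) : Matrix (Unit ⊕ Unit ⊕ κ) (Unit ⊕ Unit ⊕ κ) ℝ :=
  Matrix.of (Sum.elim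
    (fun _ : Unit => Sum.elim (fun _ : Unit => (0:ℝ))
      (Sum.elim (fun _ : Unit => a^2) (fun _ : κ => 0)))
    (Sum.elim
      (fun _ : Unit => Sum.elim (fun _ : Unit => b^2)
        (Sum.elim (fun _ : Unit => (0:ℝ)) (fun _ : κ => 0)))
      (fun i : κ => Sum.elim (fun _ : Unit => (0:ℝ))
        (Sum.elim (fun _ : Unit => (0:ℝ)) (fun j : κ => if i = j then c else 0)))))

noncomputable def Emat2 (a b c : ℝ) : Matrix (Unit ⊕ Unit ⊕ κ) (Unit ⊕ Unit ⊕ κ) ℝ :=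
  Matrix.of (Sum.elim
    (fun _ : Unit => Sum.elim (fun _ : Unit => (0:ℝ))
      (Sum.elim (fun _ : Unit => 1/b^2) (fun _ : κ => 0)))
    (Sum.elim
      (fun _ : Unit => Sum.elim (fun _ : Unit => 1/a^2)
        (Sum.elim (fun _ : Unit => (0:ℝ)) (fun _ : κ => 0)))
      (fun i : κ => Sum.elim (fun _ : Unit => (0:ℝ))
        (Sum.elim (fun _ : Unit => (0:ℝ)) (fun j : κ => if i = j then 1/c else 0)))))

end Defs

lemma case_two {n : ℕ} {κ : Type} [Fintype κ] [DecidableEq κ]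
    (hn : Nonempty (Fin n))
    (L D : Matrix (Fin n) (Fin n) ℝ) (X : Matrix (Fin n) κ ℝ) (lam : κ → ℝ)
    (hXXT : X * Xᵀ = L) (hXTX : Xᵀ * X = Matrix.diagonal lam) (hlam : ∀ j, lam j ≠ 0)
    (hX1 : Xᵀ *ᵥ (fun _ => (1:ℝ)) = 0)
    (a b : ℝ) (ha : 0 < a) (hb : 0 < b)
    (hnd : ∀ β : ℝ, ∀ v : κ → ℝ, (fun i => L i i) ≠ fun i => β + (X *ᵥ v) i)
    (hD : ∀ i j, D i j = a ^ 2 * L i i + b ^ 2 * L j j - 2 * a * b * L i j) :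
    D.rank = Fintype.card κ + 2 ∧
    ∃ Dp, IsMoorePenrose D Dp ∧ (fun _ => (1:ℝ)) ⬝ᵥ (Dp *ᵥ fun _ => (1:ℝ)) = 0 := by
  have ha' : a ≠ 0 := ne_of_gt ha
  have hb' : b ≠ 0 := ne_of_gt hb
  have hc : (-(2*a*b)) ≠ 0 := neg_ne_zero.mpr (by positivity)
  have hCE : (Cmat2 a b (-(2*a*b)) : Matrix (Unit ⊕ Unit ⊕ κ) _ ℝ)
      * Emat2 a b (-(2*a*b)) = 1 := by
    ext p q
    rcases p with _ | p' <;> [skip; rcases p' with _ | i] <;>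
      (rcases q with _ | q' <;> [skip; rcases q' with _ | j]) <;>
      simp [Cmat2, Emat2, Matrix.mul_apply, Fintype.sum_sum_type, Matrix.one_apply,
        Finset.sum_ite_eq, Finset.sum_ite_eq', ite_mul, mul_ite, zero_mul, mul_zero,
        ha', hb', hc, Sum.inr.injEq, Sum.inl.injEq] <;> split_ifs <;> field_simp <;> simp
  have hfact : D = Ymat2 (fun i => L i i) X * Cmat2 (κ := κ) a b (-(2*a*b))
      * (Ymat2 (fun i => L i i) X)ᵀ := by
    ext i k
    rw [hD i k]
    have hL : L i k = ∑ j, X i j * X k j := by rw [← hXXT]; simp [Matrix.mul_apply]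
    rw [hL]
    simp [Ymat2, Cmat2, Matrix.mul_apply, Fintype.sum_sum_type, ite_mul, zero_mul, mul_ite,
      mul_zero, Finset.sum_ite_eq, Finset.sum_ite_eq', Finset.mul_sum, Finset.sum_mul]
    ring_nf
  have hYinj : ∀ v, Ymat2 (fun i => L i i) X *ᵥ v = 0 → v = 0 := by
    intro v hv
    have hYv : Ymat2 (fun i => L i i) X *ᵥ v
        = fun i => v (Sum.inl ()) * L i i + v (Sum.inr (Sum.inl ()))
          + (X *ᵥ fun j => v (Sum.inr (Sum.inr j))) i := by
      funext i
      simp [Ymat2, Matrix.mulVec, dotProduct, Fintype.sum_sum_type]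
      ring
    by_cases h0 : v (Sum.inl ()) = 0
    · have h2 : Xᵀ *ᵥ (Ymat2 (fun i => L i i) X *ᵥ v)
          = Matrix.diagonal lam *ᵥ (fun j => v (Sum.inr (Sum.inr j))) := by
        rw [hYv, ← hXTX]
        have hsplit : (fun i => v (Sum.inl ()) * L i i + v (Sum.inr (Sum.inl ()))
            + (X *ᵥ fun j => v (Sum.inr (Sum.inr j))) i)
            = (v (Sum.inr (Sum.inl ())) • fun _ => (1:ℝ))
              + X *ᵥ (fun j => v (Sum.inr (Sum.inr j))) := by
          funext i; simp [h0, Pi.add_apply, Pi.smul_apply, smul_eq_mul]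
        rw [hsplit, Matrix.mulVec_add, Matrix.mulVec_smul, hX1, Matrix.mulVec_mulVec]
        simp
      rw [hv, Matrix.mulVec_zero] at h2
      have hκ : ∀ j, v (Sum.inr (Sum.inr j)) = 0 := by
        intro j
        have h3 := congrFun h2.symm j
        simp [Matrix.mulVec_diagonal] at h3
        rcases h3 with h3 | h3
        · exact absurd h3 (hlam j)
        · exact h3
      have h4 : v (Sum.inr (Sum.inl ())) = 0 := by
        obtain ⟨i⟩ := hn
        have h5 := congrFun hv i
        rw [congrFun hYv i] at h5
        simpa [h0, hκ, Matrix.mulVec, dotProduct] using h5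
      funext p
      rcases p with _ | p'
      · exact h0
      · rcases p' with _ | j
        · exact h4
        · exact hκ j
    · exfalso
      apply hnd (-(v (Sum.inr (Sum.inl ())) / v (Sum.inl ())))
        (fun j => -(v (Sum.inr (Sum.inr j)) / v (Sum.inl ())))
      funext i
      have h5 := congrFun hv i
      rw [congrFun hYv i] at h5
      simp only [Pi.zero_apply] at h5
      have h6 : (X *ᵥ fun j => -(v (Sum.inr (Sum.inr j)) / v (Sum.inl ()))) i
          = -(1 / v (Sum.inl ())) * (X *ᵥ fun j => v (Sum.inr (Sum.inr j))) i := by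
        simp [Matrix.mulVec, dotProduct, Finset.mul_sum]
        exact Finset.sum_congr rfl fun x _ => by field_simp
      rw [h6, show (X *ᵥ fun j => v (Sum.inr (Sum.inr j))) i
        = -(v (Sum.inl ()) * L i i) - v (Sum.inr (Sum.inl ())) from by linarith]
      field_simp
      ring
  obtain ⟨G, hG, hG'⟩ := gram_inv _ hYinj
  obtain ⟨hrank, hMP, hval⟩ := core _ _ _ G hCE hG
  constructor
  · rw [hfact, hrank]
    simp [Fintype.card_sum]
    omega
  · refine ⟨_, by rw [hfact]; exact hMP, ?_⟩
    have he : Ymat2 (fun i => L i i) X *ᵥ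
        (Sum.elim (fun _ : Unit => (0:ℝ)) (Sum.elim (fun _ : Unit => (1:ℝ)) (fun _ : κ => 0)))
        = fun _ => 1 := by
      funext i
      simp [Ymat2, Matrix.mulVec, dotProduct, Fintype.sum_sum_type]
    rw [hval _ he]
    simp [Emat2, dotProduct, Matrix.mulVec, Fintype.sum_sum_type]

section Defs1
variable {n : ℕ} {κ : Type} [Fintype κ] [DecidableEq κ]

def Ymat1 (X : Matrix (Fin n) κ ℝ) : Matrix (Fin n) (Unit ⊕ κ) ℝ :=
  Matrix.of fun i => Sum.elim (fun _ : Unit => (1:ℝ)) (fun j : κ => X i j)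

def Cmat1 (α a b c : ℝ) (w : κ → ℝ) : Matrix (Unit ⊕ κ) (Unit ⊕ κ) ℝ :=
  Matrix.of (Sum.elim
    (fun _ : Unit => Sum.elim (fun _ : Unit => α*(a^2+b^2)) (fun j : κ => b^2 * w j))
    (fun i : κ => Sum.elim (fun _ : Unit => a^2 * w i) (fun j : κ => if i = j then c else 0)))

noncomputable def Emat1 (s a b c : ℝ) (w : κ → ℝ) : Matrix (Unit ⊕ κ) (Unit ⊕ κ) ℝ :=
  Matrix.of (Sum.elim
    (fun _ : Unit => Sum.elim (fun _ : Unit => 1/s) (fun j : κ => -(b^2 * w j)/(c*s)))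
    (fun i : κ => Sum.elim (fun _ : Unit => -(a^2 * w i)/(c*s))
      (fun j : κ => (if i = j then 1/c else 0) + (a^2 * w i)*(b^2 * w j)/(c^2*s))))

end Defs1

lemma case_one {n : ℕ} {κ : Type} [Fintype κ] [DecidableEq κ]
    (hn : Nonempty (Fin n))
    (L D : Matrix (Fin n) (Fin n) ℝ) (X : Matrix (Fin n) κ ℝ) (lam : κ → ℝ)
    (hXXT : X * Xᵀ = L) (hXTX : Xᵀ * X = Matrix.diagonal lam) (hlam : ∀ j, lam j ≠ 0)
    (hX1 : Xᵀ *ᵥ (fun _ => (1:ℝ)) = 0)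
    (a b α : ℝ) (ha : 0 < a) (hb : 0 < b) (hα : 0 < α) (w : κ → ℝ)
    (hd : ∀ i, L i i = α + (X *ᵥ w) i)
    (hD : ∀ i j, D i j = a ^ 2 * L i i + b ^ 2 * L j j - 2 * a * b * L i j) :
    D.rank = Fintype.card κ + 1 ∧
    ∃ Dp, IsMoorePenrose D Dp ∧ 0 < (fun _ => (1:ℝ)) ⬝ᵥ (Dp *ᵥ fun _ => (1:ℝ)) := by
  have ha' : a ≠ 0 := ne_of_gt ha
  have hb' : b ≠ 0 := ne_of_gt hb
  obtain ⟨S, hSdef⟩ : ∃ S, (∑ j : κ, w j * w j) = S := ⟨_, rfl⟩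
  have hS0 : 0 ≤ S := hSdef ▸ Finset.sum_nonneg fun j _ => mul_self_nonneg _
  obtain ⟨c, hcdef⟩ : ∃ c, (-(2*a*b) : ℝ) = c := ⟨_, rfl⟩
  have hc : c ≠ 0 := hcdef ▸ neg_ne_zero.mpr (by positivity)
  obtain ⟨s, hsdef⟩ : ∃ s, α*(a^2+b^2) + (a*b/2)*S = s := ⟨_, rfl⟩
  have hs : 0 < s := hsdef ▸ add_pos_of_pos_of_nonneg (mul_pos hα (by positivity))
      (mul_nonneg (by positivity) hS0)
  have hsne : α*(a^2+b^2) + (a*b/2)*S ≠ 0 := by rw [hsdef]; exact hs.ne'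
  have hCE : (Cmat1 α a b c w : Matrix (Unit ⊕ κ) _ ℝ) * Emat1 s a b c w = 1 := by
    ext p q
    rcases p with _ | i <;> rcases q with _ | j <;>
      simp only [Cmat1, Emat1, Matrix.mul_apply, Fintype.sum_sum_type, Finset.univ_unique,
        Finset.sum_singleton, Matrix.of_apply, Sum.elim_inl, Sum.elim_inr, Matrix.one_apply,
        Sum.inl.injEq, Sum.inr.injEq, reduceCtorEq, reduceIte]
    · rw [Finset.sum_congr rfl fun k _ => show b^2 * w k * (-(a^2 * w k) / (c*s))
          = -(a^2*b^2)/(c*s) * (w k * w k) from by ring,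
        ← Finset.mul_sum, hSdef, ← hcdef, ← hsdef]
      field_simp
    · simp only [mul_add, mul_ite, mul_zero, Finset.sum_add_distrib, Finset.sum_ite_eq',
        Finset.mem_univ, if_true]
      rw [Finset.sum_congr rfl fun k _ => show b^2 * w k * (a^2 * w k * (b^2 * w j) / (c^2*s))
          = a^2*b^4*w j/(c^2*s) * (w k * w k) from by ring,
        ← Finset.mul_sum, hSdef, ← hcdef, ← hsdef]
      field_simp
      ring
    · simp only [ite_mul, zero_mul, Finset.sum_ite_eq, Finset.mem_univ, if_true]
      field_simp
      ring
    · simp only [ite_mul, zero_mul, Finset.sum_ite_eq, Finset.mem_univ, if_true]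
      by_cases h : i = j
      · simp only [h, if_true]
        field_simp
        ring
      · simp only [h, if_false]
        field_simp
        ring
  have hfact : D = Ymat1 X * Cmat1 α a b c w * (Ymat1 X)ᵀ := by
    ext i k
    rw [hD i k]
    have hL : L i k = ∑ j, X i j * X k j := by rw [← hXXT]; simp [Matrix.mul_apply]
    rw [hL, hd i, hd k, ← hcdef]
    simp [Ymat1, Cmat1, Matrix.mul_apply, Matrix.mulVec, dotProduct, Fintype.sum_sum_type,
      ite_mul, zero_mul, mul_ite, mul_zero, Finset.sum_ite_eq, Finset.sum_ite_eq',
      Finset.mul_sum, Finset.sum_mul, mul_add, add_mul, Finset.sum_add_distrib]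
    ring_nf
    rw [Finset.sum_congr rfl fun x _ => show b ^ 2 * w x * X k x = b ^ 2 * X k x * w x from by
          ring]
    ring
  have hYinj : ∀ v, Ymat1 X *ᵥ v = 0 → v = 0 := by
    intro v hv
    have hYv : Ymat1 X *ᵥ v
        = fun i => v (Sum.inl ()) + (X *ᵥ fun j => v (Sum.inr j)) i := by
      funext i
      simp [Ymat1, Matrix.mulVec, dotProduct, Fintype.sum_sum_type]
    have h2 : Xᵀ *ᵥ (Ymat1 X *ᵥ v) = Matrix.diagonal lam *ᵥ (fun j => v (Sum.inr j)) := by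
      rw [hYv, ← hXTX]
      have hsplit : (fun i => v (Sum.inl ()) + (X *ᵥ fun j => v (Sum.inr j)) i)
          = (v (Sum.inl ()) • fun _ => (1:ℝ)) + X *ᵥ (fun j => v (Sum.inr j)) := by
        funext i; simp [Pi.add_apply, Pi.smul_apply, smul_eq_mul]
      rw [hsplit, Matrix.mulVec_add, Matrix.mulVec_smul, hX1, Matrix.mulVec_mulVec]
      simp
    rw [hv, Matrix.mulVec_zero] at h2
    have hκ : ∀ j, v (Sum.inr j) = 0 := by
      intro j
      have h3 := congrFun h2.symm j
      simp [Matrix.mulVec_diagonal] at h3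
      rcases h3 with h3 | h3
      · exact absurd h3 (hlam j)
      · exact h3
    have h4 : v (Sum.inl ()) = 0 := by
      obtain ⟨i⟩ := hn
      have h5 := congrFun hv i
      rw [congrFun hYv i] at h5
      simpa [hκ, Matrix.mulVec, dotProduct] using h5
    funext p
    rcases p with _ | j
    · exact h4
    · exact hκ j
  obtain ⟨G, hG, hG'⟩ := gram_inv _ hYinj
  obtain ⟨hrank, hMP, hval⟩ := core _ _ _ G hCE hG
  constructor
  · rw [hfact, hrank]
    simp [Fintype.card_sum]
    omega
  · refine ⟨_, by rw [hfact]; exact hMP, ?_⟩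
    have he : Ymat1 X *ᵥ (Sum.elim (fun _ : Unit => (1:ℝ)) (fun _ : κ => 0)) = fun _ => 1 := by
      funext i
      simp [Ymat1, Matrix.mulVec, dotProduct, Fintype.sum_sum_type]
    rw [hval _ he]
    have hvv : (Sum.elim (fun _ : Unit => (1:ℝ)) (fun _ : κ => 0)) ⬝ᵥ
        (Emat1 s a b c w *ᵥ Sum.elim (fun _ : Unit => (1:ℝ)) (fun _ : κ => 0)) = 1/s := by
      simp [Emat1, dotProduct, Matrix.mulVec, Fintype.sum_sum_type]
    rw [hvv]
    exact one_div_pos.mpr hs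

noncomputable def Xspec {n : ℕ} {L : Matrix (Fin n) (Fin n) ℝ} (hH : L.IsHermitian) :
    Matrix (Fin n) {j : Fin n // hH.eigenvalues j ≠ 0} ℝ :=
  Matrix.of fun i j => Real.sqrt (hH.eigenvalues j.1) * hH.eigenvectorBasis j.1 i

lemma sum_subtype_eq {n : ℕ} (p : Fin n → Prop) [DecidablePred p] (f : Fin n → ℝ)
    (h : ∀ j, ¬ p j → f j = 0) : ∑ j : {j // p j}, f j.1 = ∑ j, f j := by
  have h1 : ∑ j ∈ Finset.univ.filter p, f j = ∑ j : {j // p j}, f j.1 :=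
    Finset.sum_subtype _ (by simp) f
  have h2 : ∑ j ∈ Finset.univ.filter p, f j = ∑ j, f j :=
    Finset.sum_filter_of_ne (fun x _ hf => by_contra fun hp => hf (h x hp))
  exact h1.symm.trans h2

/-- For a nonzero GEDM `D`: if `D` is a circum GEDM (i.e. `1ᵀ D† 1 > 0`) then
`rank D = rank L + 1`; otherwise `rank D = rank L + 2`. -/
theorem stmt17 (n : ℕ) (L D : Matrix (Fin n) (Fin n) ℝ) (hL : L.PosSemidef)
    (hL1 : L *ᵥ (fun _ => (1 : ℝ)) = 0) (hL0 : L ≠ 0)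
    (a b : ℝ) (ha : 0 < a) (hb : 0 < b)
    (hD : ∀ i j, D i j = a ^ 2 * L i i + b ^ 2 * L j j - 2 * a * b * L i j)
    (Dp : Matrix (Fin n) (Fin n) ℝ) (hDp : IsMoorePenrose D Dp) :
    (0 < (fun _ => (1 : ℝ)) ⬝ᵥ (Dp *ᵥ fun _ => (1 : ℝ)) → D.rank = L.rank + 1) ∧
    (¬ 0 < (fun _ => (1 : ℝ)) ⬝ᵥ (Dp *ᵥ fun _ => (1 : ℝ)) → D.rank = L.rank + 2) := by
  classical
  have hn : Nonempty (Fin n) := by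
    rcases Nat.eq_zero_or_pos n with h | h
    · exfalso; apply hL0; subst h; exact Subsingleton.elim _ _
    · exact ⟨⟨0, h⟩⟩
  have hH : L.IsHermitian := hL.1
  have hsym : Lᵀ = L := by
    have h := hH
    rwa [Matrix.IsHermitian, Matrix.conjTranspose_eq_transpose_of_trivial] at h
  have hnn : ∀ j, 0 ≤ hH.eigenvalues j := hL.eigenvalues_nonneg
  have horth : ∀ i j : Fin n, ∑ k, hH.eigenvectorBasis i k * hH.eigenvectorBasis j k
      = if i = j then (1:ℝ) else 0 := by
    intro i j
    have h := orthonormal_iff_ite.mp hH.eigenvectorBasis.orthonormal i j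
    simpa [PiLp.inner_apply, RCLike.inner_apply, conj_trivial, mul_comm] using h
  have heig : ∀ j, L *ᵥ ⇑(hH.eigenvectorBasis j) = hH.eigenvalues j • ⇑(hH.eigenvectorBasis j) :=
    hH.mulVec_eigenvectorBasis
  have hLentry : ∀ i k, L i k
      = ∑ j, hH.eigenvalues j * (hH.eigenvectorBasis j i * hH.eigenvectorBasis j k) := by
    intro i k
    conv_lhs => rw [hH.spectral_theorem]
    simp only [Matrix.mul_apply, Matrix.conjTranspose_apply, Matrix.diagonal_apply, ite_mul,
      zero_mul, mul_ite, mul_zero, Finset.sum_ite_eq, Finset.sum_ite_eq', Finset.mem_univ,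
      if_true, star_trivial, Matrix.star_apply, Unitary.conjStarAlgAut_apply, Unitary.coe_star,
      IsHermitian.eigenvectorUnitary_apply, RCLike.ofReal_real_eq_id, id_eq, Function.comp]
    exact Finset.sum_congr rfl fun x _ => by ring
  have hcol : ∀ k, ∑ i, L i k = 0 := by
    intro k
    have h2 : ∑ i, L k i = 0 := by
      simpa [Matrix.mulVec, dotProduct] using congrFun hL1 k
    rw [← h2]
    exact Finset.sum_congr rfl fun i _ => (congrFun (congrFun hsym i) k).symm
  set X := Xspec hH with hXdef
  have hXXT : X * Xᵀ = L := by
    ext i k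
    have h1 : (X * Xᵀ) i k = ∑ j : {j // hH.eigenvalues j ≠ 0},
        hH.eigenvalues j.1 * (hH.eigenvectorBasis j.1 i * hH.eigenvectorBasis j.1 k) := by
      rw [Matrix.mul_apply]
      refine Finset.sum_congr rfl fun j _ => ?_
      simp only [hXdef, Xspec, Matrix.transpose_apply, Matrix.of_apply]
      rw [show (Real.sqrt (hH.eigenvalues j.1) * hH.eigenvectorBasis j.1 i)
            * (Real.sqrt (hH.eigenvalues j.1) * hH.eigenvectorBasis j.1 k)
          = (Real.sqrt (hH.eigenvalues j.1) * Real.sqrt (hH.eigenvalues j.1))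
            * (hH.eigenvectorBasis j.1 i * hH.eigenvectorBasis j.1 k) from by ring,
        Real.mul_self_sqrt (hnn j.1)]
    rw [h1, hLentry i k]
    exact sum_subtype_eq (fun j => hH.eigenvalues j ≠ 0)
      (fun j => hH.eigenvalues j * (hH.eigenvectorBasis j i * hH.eigenvectorBasis j k))
      (fun j hj => by rw [not_not] at hj; simp only []; rw [hj, zero_mul])
  have hXTX : Xᵀ * X = Matrix.diagonal (fun j : {j // hH.eigenvalues j ≠ 0}
      => hH.eigenvalues j.1) := by
    ext j j'
    rw [Matrix.mul_apply]
    rw [Finset.sum_congr rfl fun i _ => show Xᵀ j i * X i j'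
        = (Real.sqrt (hH.eigenvalues j.1) * Real.sqrt (hH.eigenvalues j'.1))
          * (hH.eigenvectorBasis j.1 i * hH.eigenvectorBasis j'.1 i) from by
        simp only [hXdef, Xspec, Matrix.transpose_apply, Matrix.of_apply]; ring,
      ← Finset.mul_sum, horth j.1 j'.1]
    by_cases h : j = j'
    · subst h
      simp [Real.mul_self_sqrt (hnn j.1)]
    · have h' : j.1 ≠ j'.1 := fun hh => h (Subtype.ext hh)
      simp [h', Matrix.diagonal_apply_ne _ h]
  have hlam : ∀ j : {j // hH.eigenvalues j ≠ 0}, hH.eigenvalues j.1 ≠ 0 := fun j => j.2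
  have hX1 : Xᵀ *ᵥ (fun _ => (1:ℝ)) = 0 := by
    funext j
    have hu : ∑ i, hH.eigenvectorBasis j.1 i = 0 := by
      have h1 : hH.eigenvalues j.1 * ∑ i, hH.eigenvectorBasis j.1 i = 0 := by
        rw [Finset.mul_sum]
        calc ∑ i, hH.eigenvalues j.1 * hH.eigenvectorBasis j.1 i
            = ∑ i, (L *ᵥ ⇑(hH.eigenvectorBasis j.1)) i := by
              refine Finset.sum_congr rfl fun i _ => ?_
              rw [heig j.1]
              simp
          _ = ∑ i, ∑ k, L i k * hH.eigenvectorBasis j.1 k := by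
              simp [Matrix.mulVec, dotProduct]
          _ = ∑ k, (∑ i, L i k) * hH.eigenvectorBasis j.1 k := by
              rw [Finset.sum_comm]
              simp [Finset.sum_mul]
          _ = 0 := by simp [hcol]
      exact (mul_eq_zero.mp h1).resolve_left j.2
    have : (Xᵀ *ᵥ (fun _ => (1:ℝ))) j
        = Real.sqrt (hH.eigenvalues j.1) * ∑ i, hH.eigenvectorBasis j.1 i := by
      simp [hXdef, Xspec, Matrix.mulVec, dotProduct, Finset.mul_sum]
    rw [this, hu, mul_zero]
    simp
  have hXXTe : ∀ i k, L i k = ∑ j : {j // hH.eigenvalues j ≠ 0}, X i j * X k j := by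
    intro i k
    have h := congrFun (congrFun hXXT i) k
    rw [Matrix.mul_apply] at h
    rw [← h]
    exact Finset.sum_congr rfl fun j _ => by rw [Matrix.transpose_apply]
  have htr : 0 < ∑ i, L i i := by
    have h1 : ∑ i, L i i = ∑ i, ∑ j : {j // hH.eigenvalues j ≠ 0}, X i j * X i j := by
      exact Finset.sum_congr rfl fun i _ => hXXTe i i
    have h2 : 0 ≤ ∑ i, ∑ j : {j // hH.eigenvalues j ≠ 0}, X i j * X i j :=
      Finset.sum_nonneg fun i _ => Finset.sum_nonneg fun j _ => mul_self_nonneg _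
    rcases h2.lt_or_eq with h3 | h3
    · rw [h1]; exact h3
    · exfalso
      apply hL0
      have hX0 : ∀ i j, X i j = 0 := by
        intro i j
        have h4 := (Finset.sum_eq_zero_iff_of_nonneg
          (fun i _ => Finset.sum_nonneg fun j _ => mul_self_nonneg (X i j))).mp h3.symm
          i (Finset.mem_univ i)
        have h5 := (Finset.sum_eq_zero_iff_of_nonneg
          (fun j _ => mul_self_nonneg (X i j))).mp h4 j (Finset.mem_univ j)
        exact mul_self_eq_zero.mp h5
      ext i k
      rw [hXXTe i k]
      simp [hX0]
  have hcard : Fintype.card {j // hH.eigenvalues j ≠ 0} = L.rank :=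
    hH.rank_eq_card_non_zero_eigs.symm
  by_cases hdd : ∃ β : ℝ, ∃ v : {j // hH.eigenvalues j ≠ 0} → ℝ,
      (fun i => L i i) = fun i => β + (X *ᵥ v) i
  · obtain ⟨β, v, hβv⟩ := hdd
    have hsum0 : ∑ i, (X *ᵥ v) i = 0 := by
      calc ∑ i, (X *ᵥ v) i = ∑ i, ∑ j : {j // hH.eigenvalues j ≠ 0}, X i j * v j := by
            simp [Matrix.mulVec, dotProduct]
        _ = ∑ j : {j // hH.eigenvalues j ≠ 0}, (∑ i, X i j) * v j := by
            rw [Finset.sum_comm]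
            simp [Finset.sum_mul]
        _ = 0 := by
            refine Finset.sum_eq_zero fun j _ => ?_
            have h6 := congrFun hX1 j
            simp only [Matrix.mulVec, dotProduct, Matrix.transpose_apply, mul_one,
              Pi.zero_apply] at h6
            rw [h6, zero_mul]
    have hβ : 0 < β := by
      have h3 : ∑ i, L i i = (n : ℝ) * β := by
        calc ∑ i, L i i = ∑ i, (β + (X *ᵥ v) i) :=
              Finset.sum_congr rfl fun i _ => congrFun hβv i
          _ = (n : ℝ) * β := by
              rw [Finset.sum_add_distrib, hsum0, add_zero, Finset.sum_const,
                Finset.card_univ, Fintype.card_fin, nsmul_eq_mul]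
      have hn0 : 0 < (n : ℝ) := by
        obtain ⟨i⟩ := hn
        exact_mod_cast i.pos
      nlinarith [htr, h3, hn0]
    obtain ⟨hrank1, Dp', hMP', hval'⟩ := case_one hn L D X _ hXXT hXTX hlam hX1
      a b β ha hb hβ v (fun i => congrFun hβv i) hD
    have hDpeq : Dp = Dp' := mp_unique hDp hMP'
    constructor
    · intro _
      rw [hrank1, hcard]
    · intro hcon
      exact absurd (by rw [hDpeq]; exact hval') hcon
  · push_neg at hdd
    obtain ⟨hrank2, Dp', hMP', hval0'⟩ := case_two hn L D X _ hXXT hXTX hlam hX1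
      a b ha hb hdd hD
    have hDpeq : Dp = Dp' := mp_unique hDp hMP'
    constructor
    · intro hcon
      exfalso
      rw [hDpeq, hval0'] at hcon
      exact lt_irrefl 0 hcon
    · intro _
      rw [hrank2, hcard]
end

section
/- If D is a circum generalized Euclidean distance matrix built from L with parameters a, b (so that 1'D†1 > 0), then D† = -(1/(2ab))L† + (1/(1'D†1))(D†1)(1'D†). -/
open Matrix

section Aux

variable {n : ℕ}

lemma vmv_mul (x y : Fin n → ℝ) (A : Matrix (Fin n) (Fin n) ℝ) :
    vecMulVec x y * A = vecMulVec x (y ᵥ* A) := by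
  ext i j
  simp only [Matrix.mul_apply, vecMulVec_apply, Matrix.vecMul, dotProduct, Finset.mul_sum]
  exact Finset.sum_congr rfl fun k _ => by ring

lemma mul_vmv (A : Matrix (Fin n) (Fin n) ℝ) (x y : Fin n → ℝ) :
    A * vecMulVec x y = vecMulVec (A *ᵥ x) y := by
  ext i j
  simp only [Matrix.mul_apply, vecMulVec_apply, Matrix.mulVec, dotProduct, Finset.sum_mul]
  exact Finset.sum_congr rfl fun k _ => by ring

lemma vmv_mulVec (x y z : Fin n → ℝ) : vecMulVec x y *ᵥ z = (y ⬝ᵥ z) • x := by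
  ext i
  simp only [Matrix.mulVec, dotProduct, vecMulVec_apply, Pi.smul_apply, smul_eq_mul]
  rw [Finset.sum_mul]
  exact Finset.sum_congr rfl fun k _ => by ring

lemma vecMul_vmv (z x y : Fin n → ℝ) : z ᵥ* vecMulVec x y = (z ⬝ᵥ x) • y := by
  ext j
  simp only [Matrix.vecMul, dotProduct, vecMulVec_apply, Pi.smul_apply, smul_eq_mul,
    Finset.sum_mul]
  exact Finset.sum_congr rfl fun k _ => by ring

lemma smul_vmv (c : ℝ) (x y : Fin n → ℝ) :
    vecMulVec (c • x) y = c • vecMulVec x y := by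
  ext i j
  simp only [vecMulVec_apply, Pi.smul_apply, smul_eq_mul, Matrix.smul_apply]
  ring

lemma vmv_sub_left (x y z : Fin n → ℝ) :
    vecMulVec (x - y) z = vecMulVec x z - vecMulVec y z := by
  ext i j
  simp only [vecMulVec_apply, Pi.sub_apply, Matrix.sub_apply]
  ring

lemma mp_unique_s18 (A X Y : Matrix (Fin n) (Fin n) ℝ)
    (hX : IsMoorePenrose A X) (hY : IsMoorePenrose A Y) : X = Y := by
  obtain ⟨hx1, hx2, hx3, hx4⟩ := hX
  obtain ⟨hy1, hy2, hy3, hy4⟩ := hY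
  have ht1 : Aᵀ = Aᵀ * (A * Y) := by
    conv_lhs => rw [← hy1]
    rw [Matrix.transpose_mul, hy3]
  have ht2 : Aᵀ = (Y * A) * Aᵀ := by
    conv_lhs => rw [← hy1, mul_assoc]
    rw [Matrix.transpose_mul, hy4]
  have hAX : A * X = A * Y := by
    calc A * X = (A * X)ᵀ := hx3.symm
      _ = Xᵀ * Aᵀ := Matrix.transpose_mul _ _
      _ = Xᵀ * (Aᵀ * (A * Y)) := by rw [← ht1]
      _ = (Xᵀ * Aᵀ) * (A * Y) := by rw [mul_assoc]
      _ = (A * X) * (A * Y) := by rw [← Matrix.transpose_mul, hx3]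
      _ = A * X * A * Y := by rw [← mul_assoc]
      _ = A * Y := by rw [hx1]
  have hXA : X * A = Y * A := by
    calc X * A = (X * A)ᵀ := hx4.symm
      _ = Aᵀ * Xᵀ := Matrix.transpose_mul _ _
      _ = ((Y * A) * Aᵀ) * Xᵀ := by rw [← ht2]
      _ = (Y * A) * (Aᵀ * Xᵀ) := by rw [mul_assoc]
      _ = (Y * A) * (X * A) := by rw [← Matrix.transpose_mul, hx4]
      _ = Y * (A * (X * A)) := by rw [mul_assoc]
      _ = Y * (A * X * A) := by rw [← mul_assoc A X A]
      _ = Y * A := by rw [hx1]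
  calc X = X * A * X := hx2.symm
    _ = X * (A * X) := by rw [mul_assoc]
    _ = X * (A * Y) := by rw [hAX]
    _ = (X * A) * Y := by rw [← mul_assoc]
    _ = (Y * A) * Y := by rw [hXA]
    _ = Y := hy2

lemma vmv_sub_right (x y z : Fin n → ℝ) :
    vecMulVec x (y - z) = vecMulVec x y - vecMulVec x z := by
  ext i j
  simp only [vecMulVec_apply, Pi.sub_apply, Matrix.sub_apply]
  ring

lemma smul_vmv_right (c : ℝ) (x y : Fin n → ℝ) :
    vecMulVec x (c • y) = c • vecMulVec x y := by
  ext i j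
  simp only [vecMulVec_apply, Pi.smul_apply, smul_eq_mul, Matrix.smul_apply]
  ring

lemma vecMul_smulM (x : Fin n → ℝ) (c : ℝ) (A : Matrix (Fin n) (Fin n) ℝ) :
    x ᵥ* (c • A) = c • (x ᵥ* A) := by
  ext j
  simp only [Matrix.vecMul, dotProduct, Matrix.smul_apply, Pi.smul_apply, smul_eq_mul]
  rw [Finset.mul_sum]
  exact Finset.sum_congr rfl fun k _ => by ring


end Aux

set_option maxHeartbeats 4000000 in
/-- For a circum GEDM `D` (i.e. `1ᵀ D† 1 > 0`):
`D† = -(1/(2ab)) L† + (1/(1ᵀD†1)) (D†1)(1ᵀD†)`. -/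
theorem stmt18 (n : ℕ) (L D : Matrix (Fin n) (Fin n) ℝ) (hL : L.PosSemidef)
    (hL1 : L *ᵥ (fun _ => (1 : ℝ)) = 0) (hL0 : L ≠ 0)
    (a b : ℝ) (ha : 0 < a) (hb : 0 < b)
    (hD : ∀ i j, D i j = a ^ 2 * L i i + b ^ 2 * L j j - 2 * a * b * L i j)
    (Dp : Matrix (Fin n) (Fin n) ℝ) (hDp : IsMoorePenrose D Dp)
    (Lp : Matrix (Fin n) (Fin n) ℝ) (hLp : IsMoorePenrose L Lp)
    (hcirc : 0 < (fun _ => (1 : ℝ)) ⬝ᵥ (Dp *ᵥ fun _ => (1 : ℝ))) :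
    Dp = -(1 / (2 * a * b)) • Lp +
      (1 / ((fun _ => (1 : ℝ)) ⬝ᵥ (Dp *ᵥ fun _ => (1 : ℝ)))) •
        Matrix.vecMulVec (Dp *ᵥ fun _ => (1 : ℝ)) ((fun _ => (1 : ℝ)) ᵥ* Dp) := by
  classical
  obtain ⟨hd1, hd2, hd3, hd4⟩ := hDp
  set e : Fin n → ℝ := fun _ => (1 : ℝ) with he
  have hn0 : n ≠ 0 := by
    rintro rfl
    simp [dotProduct] at hcirc
  have hnR : ((n : ℝ)) ≠ 0 := Nat.cast_ne_zero.mpr hn0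
  have hnpos : (0:ℝ) < n := by
    exact_mod_cast Nat.pos_of_ne_zero hn0
  have hLsym : ∀ i j, L j i = L i j := by
    intro i j
    have h := congrFun (congrFun hL.1 i) j
    simpa [Matrix.conjTranspose_apply] using h
  have hLt : Lᵀ = L := by
    ext i j; exact hLsym i j
  have hLrow : ∀ i, ∑ j, L i j = 0 := by
    intro i
    have h := congrFun hL1 i
    simpa [Matrix.mulVec, dotProduct, he] using h
  have hLcol : ∀ j, ∑ i, L i j = 0 := by
    intro j
    calc ∑ i, L i j = ∑ i, L j i := Finset.sum_congr rfl fun i _ => (hLsym j i)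
      _ = 0 := hLrow j
  have hLe : L *ᵥ e = 0 := hL1
  have heL : e ᵥ* L = 0 := by
    ext j
    have h : (e ᵥ* L) j = ∑ i, L i j := by simp [Matrix.vecMul, dotProduct, he]
    rw [h, hLcol j]
    rfl
  have hdiag : ∀ i, 0 ≤ L i i := by
    intro i
    have h := hL.dotProduct_mulVec_nonneg (Pi.single i 1)
    simpa [Matrix.mulVec_single, dotProduct, Pi.single_apply] using h
  have hτnn : 0 ≤ ∑ i, L i i := Finset.sum_nonneg fun i _ => hdiag i
  have hτpos : 0 < ∑ i, L i i := by
    rcases hτnn.lt_or_eq with h | h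
    · exact h
    · exfalso
      apply hL0
      have hzero : ∀ i, L i i = 0 := by
        intro i
        exact (Finset.sum_eq_zero_iff_of_nonneg (fun i _ => hdiag i)).mp h.symm i
          (Finset.mem_univ i)
      ext i j
      have hx : star (Pi.single j (1:ℝ)) ⬝ᵥ L *ᵥ Pi.single j (1:ℝ) = 0 := by
        simp [Matrix.mulVec_single, dotProduct, Pi.single_apply, hzero]
      have h2 := (hL.dotProduct_mulVec_zero_iff (Pi.single j 1)).mp hx
      have h3 := congrFun h2 i
      simpa [Matrix.mulVec_single] using h3
  set τ : ℝ := ∑ i, L i i with hτ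
  set c : ℝ := 2 * a * b with hc
  have hcpos : 0 < c := by rw [hc]; positivity
  have hcne : c ≠ 0 := ne_of_gt hcpos
  set σ : ℝ := (a ^ 2 + b ^ 2) * τ with hσ
  set J : Matrix (Fin n) (Fin n) ℝ := vecMulVec e e with hJ
  have hJapp : ∀ i j, J i j = 1 := by
    intro i j; simp [hJ, vecMulVec_apply, he]
  have hJt : Jᵀ = J := by
    ext i j; rw [Matrix.transpose_apply, hJapp, hJapp]
  have hDJ : ∀ i j, (D * J) i j = n * (a ^ 2 * L i i) + b ^ 2 * τ := by
    intro i j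
    have h0 : (D * J) i j = ∑ k, D i k := by
      simp [Matrix.mul_apply, hJapp]
    rw [h0]
    calc ∑ k, D i k = ∑ k, (a^2 * L i i + b^2 * L k k - c * L i k) :=
          Finset.sum_congr rfl fun k _ => by rw [hD i k]
      _ = (n : ℝ) * (a^2 * L i i) + b^2 * τ - c * ∑ k, L i k := by
          rw [Finset.sum_sub_distrib, Finset.sum_add_distrib, Finset.sum_const,
            ← Finset.mul_sum, ← Finset.mul_sum, hτ]
          simp [nsmul_eq_mul]
      _ = _ := by rw [hLrow i]; ring
  have hJD : ∀ i j, (J * D) i j = a ^ 2 * τ + n * (b ^ 2 * L j j) := by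
    intro i j
    have h0 : (J * D) i j = ∑ k, D k j := by
      simp [Matrix.mul_apply, hJapp]
    rw [h0]
    calc ∑ k, D k j = ∑ k, (a^2 * L k k + b^2 * L j j - c * L k j) :=
          Finset.sum_congr rfl fun k _ => by rw [hD k j]
      _ = a^2 * τ + (n : ℝ) * (b^2 * L j j) - c * ∑ k, L k j := by
          rw [Finset.sum_sub_distrib, Finset.sum_add_distrib, Finset.sum_const,
            ← Finset.mul_sum, ← Finset.mul_sum, hτ]
          simp [nsmul_eq_mul]
      _ = _ := by rw [hLcol j]; ring
  have hKey : ((n:ℝ) * c) • L = D * J + J * D - σ • J - (n:ℝ) • D := by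
    ext i j
    simp only [Matrix.smul_apply, Matrix.sub_apply, Matrix.add_apply, smul_eq_mul]
    rw [hDJ i j, hJD i j, hJapp i j, hD i j, hσ, hc]
    ring
  set M : Matrix (Fin n) (Fin n) ℝ := D * Dp with hM
  set N : Matrix (Fin n) (Fin n) ℝ := Dp * D with hN
  -- hd1 : M * D = D, hd2 : N * Dp = Dp, hd3 : Mᵀ = M, hd4 : Nᵀ = N
  have hMM : M * M = M := by
    have h := mul_assoc M D Dp
    rw [hd1] at h
    rw [← hM] at h
    exact h.symm
  have hNN : N * N = N := by
    have h := (mul_assoc N Dp D).symm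
    rw [hd2] at h
    rw [← hN] at h
    exact h
  have hDN : D * N = D := by
    have h := (mul_assoc D Dp D).symm
    rw [hd1] at h
    rw [← hN] at h
    exact h
  have hDpM : Dp * M = Dp := by
    have h := mul_assoc Dp D Dp
    rw [hd2] at h
    rw [← hM] at h
    exact h.symm
  -- H1 : M *ᵥ e = e
  set r : Fin n → ℝ := e - M *ᵥ e with hr
  have hMr : M *ᵥ r = 0 := by
    rw [hr, Matrix.mulVec_sub, Matrix.mulVec_mulVec, hMM, sub_self]
  have hrM : r ᵥ* M = 0 := by
    rw [← Matrix.mulVec_transpose, hd3, hMr]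
  have hrD : r ᵥ* D = 0 := by
    rw [hr, Matrix.sub_vecMul, Matrix.vecMul_mulVec, hd3, hd1, sub_self]
  set s : ℝ := e ⬝ᵥ r with hs
  have hMer : (M *ᵥ e) ⬝ᵥ r = 0 := by
    rw [dotProduct_comm, Matrix.dotProduct_mulVec, hrM, zero_dotProduct]
  have hsr : r ⬝ᵥ r = s := by
    conv_lhs => rw [hr]
    rw [sub_dotProduct, hMer, sub_zero, hs]
  have hsnn : 0 ≤ s := by
    rw [← hsr]
    exact Finset.sum_nonneg fun i _ => mul_self_nonneg (r i)
  have hrsum : ∑ i, r i = s := by rw [hs]; simp [dotProduct, he]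
  set w : ℝ := ∑ i, r i * L i i with hw
  have hcLr : ∀ j, c * (r ᵥ* L) j = a^2 * w + b^2 * s * L j j := by
    intro j
    have h0 : ∑ i, r i * D i j = 0 := by
      have h := congrFun hrD j
      simpa [Matrix.vecMul, dotProduct] using h
    have h1 : ∑ i, r i * D i j
        = a^2 * w + b^2 * L j j * s - c * ∑ i, r i * L i j := by
      calc ∑ i, r i * D i j
          = ∑ i, (a^2 * (r i * L i i) + b^2 * L j j * r i - c * (r i * L i j)) :=
            Finset.sum_congr rfl fun i _ => by rw [hD i j]; ring
        _ = a^2 * (∑ i, r i * L i i) + b^2 * L j j * (∑ i, r i)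
              - c * (∑ i, r i * L i j) := by
            rw [Finset.sum_sub_distrib, Finset.sum_add_distrib, ← Finset.mul_sum,
              ← Finset.mul_sum, ← Finset.mul_sum]
        _ = _ := by rw [← hw, hrsum]
    have h2 : (r ᵥ* L) j = ∑ i, r i * L i j := by simp [Matrix.vecMul, dotProduct]
    rw [h2]
    linear_combination h1 - h0
  have hsumLrow : ∑ j, (r ᵥ* L) j = 0 := by
    have h := Matrix.dotProduct_mulVec r L e
    rw [hLe, dotProduct_zero] at h
    have h2 : (r ᵥ* L) ⬝ᵥ e = ∑ j, (r ᵥ* L) j := by simp [dotProduct, he]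
    rw [h2] at h
    exact h.symm
  have hw_eq : (n : ℝ) * (a^2 * w) + b^2 * s * τ = 0 := by
    have h := Finset.sum_congr rfl (fun j (_ : j ∈ (Finset.univ : Finset (Fin n))) => hcLr j)
    rw [← Finset.mul_sum, hsumLrow, mul_zero] at h
    rw [Finset.sum_add_distrib, Finset.sum_const, ← Finset.mul_sum, ← hτ] at h
    simp only [Finset.card_univ, Fintype.card_fin, nsmul_eq_mul] at h
    linarith [h]
  have hquad : c * (r ⬝ᵥ (L *ᵥ r)) = (a^2 + b^2) * w * s := by
    rw [Matrix.dotProduct_mulVec]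
    have h1 : (r ᵥ* L) ⬝ᵥ r = ∑ j, (r ᵥ* L) j * r j := rfl
    rw [h1, Finset.mul_sum]
    calc ∑ j, c * ((r ᵥ* L) j * r j)
        = ∑ j, (c * (r ᵥ* L) j) * r j := Finset.sum_congr rfl fun j _ => by ring
      _ = ∑ j, (a^2 * w + b^2 * s * L j j) * r j :=
          Finset.sum_congr rfl fun j _ => by rw [hcLr j]
      _ = ∑ j, ((a^2 * w) * r j + (b^2 * s) * (r j * L j j)) :=
          Finset.sum_congr rfl fun j _ => by ring
      _ = (a^2 * w) * (∑ j, r j) + (b^2 * s) * (∑ j, r j * L j j) := by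
          rw [Finset.sum_add_distrib, ← Finset.mul_sum, ← Finset.mul_sum]
      _ = (a^2 + b^2) * w * s := by rw [hrsum, ← hw]; ring
  have hpsd : 0 ≤ r ⬝ᵥ (L *ᵥ r) := by simpa using hL.dotProduct_mulVec_nonneg r
  have hs0 : s = 0 := by
    have h5 : 0 ≤ (a^2 + b^2) * w * s := by
      rw [← hquad]; exact mul_nonneg hcpos.le hpsd
    have h6 : 0 ≤ (n:ℝ) * a^2 * ((a^2+b^2) * w * s) :=
      mul_nonneg (by positivity) h5
    have h7 : (n:ℝ) * a^2 * ((a^2+b^2) * w * s) = -((a^2+b^2) * b^2 * τ * s^2) := by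
      linear_combination ((a^2+b^2) * s) * hw_eq
    have h8 : (a^2+b^2) * b^2 * τ * s^2 ≤ 0 := by
      rw [h7] at h6; linarith
    have h9 : 0 < (a^2+b^2) * b^2 * τ := by positivity
    have h10 : s^2 = 0 := by nlinarith [sq_nonneg s]
    exact pow_eq_zero_iff (two_ne_zero) |>.mp h10
  have hr0 : r = 0 := by
    have h : r ⬝ᵥ r = 0 := by rw [hsr, hs0]
    exact dotProduct_self_eq_zero.mp h
  have H1 : M *ᵥ e = e := by
    have h := hr.symm.trans hr0
    exact (sub_eq_zero.mp h).symm
  -- H2 : N *ᵥ e = e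
  set r2 : Fin n → ℝ := e - N *ᵥ e with hr2
  have hNr2 : N *ᵥ r2 = 0 := by
    rw [hr2, Matrix.mulVec_sub, Matrix.mulVec_mulVec, hNN, sub_self]
  have hr2N : r2 ᵥ* N = 0 := by
    rw [← Matrix.mulVec_transpose, hd4, hNr2]
  have hDr2 : D *ᵥ r2 = 0 := by
    rw [hr2, Matrix.mulVec_sub, Matrix.mulVec_mulVec, hDN, sub_self]
  set s2 : ℝ := e ⬝ᵥ r2 with hs2
  have hNer2 : (N *ᵥ e) ⬝ᵥ r2 = 0 := by
    rw [dotProduct_comm, Matrix.dotProduct_mulVec, hr2N, zero_dotProduct]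
  have hs2r : r2 ⬝ᵥ r2 = s2 := by
    conv_lhs => rw [hr2]
    rw [sub_dotProduct, hNer2, sub_zero, hs2]
  have hs2nn : 0 ≤ s2 := by
    rw [← hs2r]
    exact Finset.sum_nonneg fun i _ => mul_self_nonneg (r2 i)
  have hr2sum : ∑ j, r2 j = s2 := by rw [hs2]; simp [dotProduct, he]
  set w2 : ℝ := ∑ j, r2 j * L j j with hw2
  have hcLr2 : ∀ i, c * (L *ᵥ r2) i = a^2 * L i i * s2 + b^2 * w2 := by
    intro i
    have h0 : ∑ j, D i j * r2 j = 0 := by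
      have h := congrFun hDr2 i
      simpa [Matrix.mulVec, dotProduct] using h
    have h1 : ∑ j, D i j * r2 j
        = a^2 * L i i * s2 + b^2 * w2 - c * ∑ j, L i j * r2 j := by
      calc ∑ j, D i j * r2 j
          = ∑ j, (a^2 * L i i * r2 j + b^2 * (r2 j * L j j) - c * (L i j * r2 j)) :=
            Finset.sum_congr rfl fun j _ => by rw [hD i j]; ring
        _ = a^2 * L i i * (∑ j, r2 j) + b^2 * (∑ j, r2 j * L j j)
              - c * (∑ j, L i j * r2 j) := by
            rw [Finset.sum_sub_distrib, Finset.sum_add_distrib, ← Finset.mul_sum,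
              ← Finset.mul_sum, ← Finset.mul_sum]
        _ = _ := by rw [← hw2, hr2sum]
    have h2 : (L *ᵥ r2) i = ∑ j, L i j * r2 j := by simp [Matrix.mulVec, dotProduct]
    rw [h2]
    linear_combination h1 - h0
  have hsumLr2 : ∑ i, (L *ᵥ r2) i = 0 := by
    have h := Matrix.dotProduct_mulVec e L r2
    rw [heL, zero_dotProduct] at h
    have h2 : e ⬝ᵥ (L *ᵥ r2) = ∑ i, (L *ᵥ r2) i := by simp [dotProduct, he]
    rw [h2] at h
    exact h
  have hw2_eq : a^2 * s2 * τ + (n : ℝ) * (b^2 * w2) = 0 := by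
    have h := Finset.sum_congr rfl (fun i (_ : i ∈ (Finset.univ : Finset (Fin n))) => hcLr2 i)
    rw [← Finset.mul_sum, hsumLr2, mul_zero] at h
    have h3 : ∑ i, (a^2 * L i i * s2 + b^2 * w2) =
        a^2 * s2 * τ + (n : ℝ) * (b^2 * w2) := by
      rw [Finset.sum_add_distrib, Finset.sum_const]
      have h4 : ∑ i, a^2 * L i i * s2 = a^2 * s2 * τ := by
        rw [hτ, Finset.mul_sum]
        exact Finset.sum_congr rfl fun i _ => by ring
      rw [h4]
      simp [nsmul_eq_mul]
    rw [h3] at h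
    exact h.symm
  have hquad2 : c * (r2 ⬝ᵥ (L *ᵥ r2)) = (a^2 + b^2) * w2 * s2 := by
    have h1 : r2 ⬝ᵥ (L *ᵥ r2) = ∑ i, r2 i * (L *ᵥ r2) i := rfl
    rw [h1, Finset.mul_sum]
    calc ∑ i, c * (r2 i * (L *ᵥ r2) i)
        = ∑ i, r2 i * (c * (L *ᵥ r2) i) := Finset.sum_congr rfl fun i _ => by ring
      _ = ∑ i, r2 i * (a^2 * L i i * s2 + b^2 * w2) :=
          Finset.sum_congr rfl fun i _ => by rw [hcLr2 i]
      _ = ∑ i, ((a^2 * s2) * (r2 i * L i i) + (b^2 * w2) * r2 i) :=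
          Finset.sum_congr rfl fun i _ => by ring
      _ = (a^2 * s2) * (∑ i, r2 i * L i i) + (b^2 * w2) * (∑ i, r2 i) := by
          rw [Finset.sum_add_distrib, ← Finset.mul_sum, ← Finset.mul_sum]
      _ = (a^2 + b^2) * w2 * s2 := by rw [hr2sum, ← hw2]; ring
  have hpsd2 : 0 ≤ r2 ⬝ᵥ (L *ᵥ r2) := by simpa using hL.dotProduct_mulVec_nonneg r2
  have hs20 : s2 = 0 := by
    have h5 : 0 ≤ (a^2 + b^2) * w2 * s2 := by
      rw [← hquad2]; exact mul_nonneg hcpos.le hpsd2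
    have h6 : 0 ≤ (n:ℝ) * b^2 * ((a^2+b^2) * w2 * s2) :=
      mul_nonneg (by positivity) h5
    have h7 : (n:ℝ) * b^2 * ((a^2+b^2) * w2 * s2) = -((a^2+b^2) * a^2 * τ * s2^2) := by
      linear_combination ((a^2+b^2) * s2) * hw2_eq
    have h8 : (a^2+b^2) * a^2 * τ * s2^2 ≤ 0 := by
      rw [h7] at h6; linarith
    have h9 : 0 < (a^2+b^2) * a^2 * τ := by positivity
    have h10 : s2^2 = 0 := by nlinarith [sq_nonneg s2]
    exact pow_eq_zero_iff (two_ne_zero) |>.mp h10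
  have hr20 : r2 = 0 := by
    have h : r2 ⬝ᵥ r2 = 0 := by rw [hs2r, hs20]
    exact dotProduct_self_eq_zero.mp h
  have H2 : N *ᵥ e = e := by
    have h := hr2.symm.trans hr20
    exact (sub_eq_zero.mp h).symm
  -- setup for the final computation
  set u : Fin n → ℝ := Dp *ᵥ e with hu
  set v : Fin n → ℝ := e ᵥ* Dp with hv
  set β : ℝ := e ⬝ᵥ u with hβ
  have hβpos : 0 < β := hcirc
  have hβne : β ≠ 0 := ne_of_gt hβpos
  have hvβ : v ⬝ᵥ e = β := by
    rw [hβ, hu, hv]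
    exact (Matrix.dotProduct_mulVec e Dp e).symm
  have hee : e ⬝ᵥ e = (n : ℝ) := by simp [dotProduct, he]
  set U : Matrix (Fin n) (Fin n) ℝ := vecMulVec u v with hU
  set Y : Matrix (Fin n) (Fin n) ℝ := (-c) • Dp + (c / β) • U with hY
  have hJe : J *ᵥ e = (n:ℝ) • e := by rw [hJ, vmv_mulVec, hee]
  have heJ : e ᵥ* J = (n:ℝ) • e := by rw [hJ, vecMul_vmv, hee]
  have hMJ : M * J = J := by rw [hJ, mul_vmv, H1]
  have hJM : J * M = J := by
    have h := congrArg Matrix.transpose hMJ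
    rw [Matrix.transpose_mul, hJt, hd3] at h
    exact h
  have hNJ : N * J = J := by rw [hJ, mul_vmv, H2]
  have hJN : J * N = J := by
    have h := congrArg Matrix.transpose hNJ
    rw [Matrix.transpose_mul, hJt, hd4] at h
    exact h
  have hJDp : J * Dp = vecMulVec e v := by rw [hJ, vmv_mul, ← hv]
  have hDpJ : Dp * J = vecMulVec u e := by rw [hJ, mul_vmv, ← hu]
  have hvmvzero : vecMulVec (0 : Fin n → ℝ) e = 0 := by
    ext i j; simp [vecMulVec_apply]
  have hvmvzero2 : vecMulVec e (0 : Fin n → ℝ) = 0 := by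
    ext i j; simp [vecMulVec_apply]
  have hLJ : L * J = 0 := by rw [hJ, mul_vmv, hLe, hvmvzero]
  have hJL : J * L = 0 := by rw [hJ, vmv_mul, heL, hvmvzero2]
  have heN : e ᵥ* N = e := by rw [← Matrix.mulVec_transpose, hd4, H2]
  -- c L Dp
  have hLDp : ((n:ℝ)*c) • (L * Dp) = vecMulVec (D *ᵥ e) v + J - σ • vecMulVec e v - (n:ℝ) • M := by
    have h : (((n:ℝ)*c) • L) * Dp = (D * J + J * D - σ • J - (n:ℝ) • D) * Dp := by
      rw [hKey]
    rw [smul_mul_assoc] at h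
    rw [Matrix.sub_mul, Matrix.sub_mul, Matrix.add_mul, smul_mul_assoc, smul_mul_assoc] at h
    rw [mul_assoc D J Dp, hJDp, mul_vmv] at h
    rw [mul_assoc J D Dp, ← hM, hJM] at h
    exact h
  have hLu : ((n:ℝ)*c) • (L *ᵥ u) = β • (D *ᵥ e) - (σ*β) • e := by
    have h : (((n:ℝ)*c) • (L * Dp)) *ᵥ e
        = (vecMulVec (D *ᵥ e) v + J - σ • vecMulVec e v - (n:ℝ) • M) *ᵥ e := by
      rw [hLDp]
    rw [Matrix.smul_mulVec, ← Matrix.mulVec_mulVec, ← hu] at h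
    rw [Matrix.sub_mulVec, Matrix.sub_mulVec, Matrix.add_mulVec, vmv_mulVec, hvβ, hJe,
      Matrix.smul_mulVec, vmv_mulVec, hvβ, Matrix.smul_mulVec, H1] at h
    rw [h, smul_smul]
    abel
  have hLU : ((n:ℝ)*c) • (L * U) = β • vecMulVec (D *ᵥ e) v - (σ*β) • vecMulVec e v := by
    rw [hU, mul_vmv, ← smul_vmv, hLu, vmv_sub_left, smul_vmv, smul_vmv]
  have key1 : (n:ℝ) • (L * Y) = (n:ℝ) • M - J := by
    have c1 : (1/β) * β = 1 := by field_simp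
    have c2 : (1/β) * (σ*β) = σ := by field_simp
    calc (n:ℝ) • (L * Y) = (n:ℝ) • ((-c) • (L * Dp) + (c/β) • (L * U)) := by
          rw [hY, mul_add, mul_smul_comm, mul_smul_comm]
      _ = (-1 : ℝ) • (((n:ℝ)*c) • (L * Dp)) + (1/β) • (((n:ℝ)*c) • (L * U)) := by
          rw [smul_add, smul_smul, smul_smul, smul_smul, smul_smul]
          congr 1
          · congr 1; ring
          · congr 1; ring
      _ = (-1:ℝ) • (vecMulVec (D *ᵥ e) v + J - σ • vecMulVec e v - (n:ℝ) • M)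
            + (1/β) • (β • vecMulVec (D *ᵥ e) v - (σ*β) • vecMulVec e v) := by
          rw [hLDp, hLU]
      _ = (n:ℝ) • M - J := by
          have hsplit : (1/β) • (β • vecMulVec (D *ᵥ e) v - (σ*β) • vecMulVec e v)
              = vecMulVec (D *ᵥ e) v - σ • vecMulVec e v := by
            rw [smul_sub, smul_smul, smul_smul, c1, c2, one_smul]
          rw [hsplit, neg_one_smul]
          abel
  -- c Dp L
  have hDpL : ((n:ℝ)*c) • (Dp * L) = J + vecMulVec u (e ᵥ* D) - σ • vecMulVec u e - (n:ℝ) • N := by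
    have h : Dp * (((n:ℝ)*c) • L) = Dp * (D * J + J * D - σ • J - (n:ℝ) • D) := by
      rw [hKey]
    rw [mul_smul_comm] at h
    rw [mul_sub, mul_sub, mul_add, mul_smul_comm, mul_smul_comm] at h
    rw [← mul_assoc Dp D J, ← hN, hNJ] at h
    rw [← mul_assoc Dp J D, hDpJ, vmv_mul] at h
    exact h
  have hvL : ((n:ℝ)*c) • (v ᵥ* L) = β • (e ᵥ* D) - (σ*β) • e := by
    have h : e ᵥ* (((n:ℝ)*c) • (Dp * L))
        = e ᵥ* (J + vecMulVec u (e ᵥ* D) - σ • vecMulVec u e - (n:ℝ) • N) := by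
      rw [hDpL]
    rw [vecMul_smulM, ← Matrix.vecMul_vecMul, ← hv] at h
    rw [Matrix.vecMul_sub, Matrix.vecMul_sub, Matrix.vecMul_add, heJ, vecMul_vmv, ← hβ,
      vecMul_smulM, vecMul_vmv, ← hβ, vecMul_smulM, heN] at h
    rw [h, smul_smul]
    abel
  have hUL : ((n:ℝ)*c) • (U * L) = β • vecMulVec u (e ᵥ* D) - (σ*β) • vecMulVec u e := by
    rw [hU, vmv_mul, ← smul_vmv_right, hvL, vmv_sub_right, smul_vmv_right, smul_vmv_right]
  have key2 : (n:ℝ) • (Y * L) = (n:ℝ) • N - J := by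
    have c1 : (1/β) * β = 1 := by field_simp
    have c2 : (1/β) * (σ*β) = σ := by field_simp
    calc (n:ℝ) • (Y * L) = (n:ℝ) • ((-c) • (Dp * L) + (c/β) • (U * L)) := by
          rw [hY, Matrix.add_mul, smul_mul_assoc, smul_mul_assoc]
      _ = (-1 : ℝ) • (((n:ℝ)*c) • (Dp * L)) + (1/β) • (((n:ℝ)*c) • (U * L)) := by
          rw [smul_add, smul_smul, smul_smul, smul_smul, smul_smul]
          congr 1
          · congr 1; ring
          · congr 1; ring
      _ = (-1:ℝ) • (J + vecMulVec u (e ᵥ* D) - σ • vecMulVec u e - (n:ℝ) • N)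
            + (1/β) • (β • vecMulVec u (e ᵥ* D) - (σ*β) • vecMulVec u e) := by
          rw [hDpL, hUL]
      _ = (n:ℝ) • N - J := by
          have hsplit : (1/β) • (β • vecMulVec u (e ᵥ* D) - (σ*β) • vecMulVec u e)
              = vecMulVec u (e ᵥ* D) - σ • vecMulVec u e := by
            rw [smul_sub, smul_smul, smul_smul, c1, c2, one_smul]
          rw [hsplit, neg_one_smul]
          abel
  -- M L = L and N Y = Y etc.
  have hML : M * L = L := by
    have h : M * (((n:ℝ)*c) • L) = M * (D * J + J * D - σ • J - (n:ℝ) • D) := by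
      rw [hKey]
    rw [mul_smul_comm] at h
    rw [mul_sub, mul_sub, mul_add, mul_smul_comm, mul_smul_comm] at h
    rw [← mul_assoc M D J, hd1] at h
    rw [← mul_assoc M J D, hMJ] at h
    rw [← hKey] at h
    have hncne : ((n:ℝ)*c) ≠ 0 := mul_ne_zero hnR hcne
    exact smul_right_injective _ hncne h
  have hNY : N * Y = Y := by
    have hNu : N *ᵥ u = u := by
      rw [hu, Matrix.mulVec_mulVec, hd2]
    rw [hY, mul_add, mul_smul_comm, mul_smul_comm, hd2, hU, mul_vmv, hNu]
  have hJY : J * Y = 0 := by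
    have hJu : J *ᵥ u = β • e := by rw [hJ, vmv_mulVec, ← hβ]
    have c3 : c/β * β = c := by field_simp
    rw [hY, mul_add, mul_smul_comm, mul_smul_comm, hJDp, hU, mul_vmv, hJu, smul_vmv,
      smul_smul, c3, neg_smul]
    abel
  -- Moore-Penrose equations for Y and L
  have mp1 : L * Y * L = L := by
    have h : ((n:ℝ) • (L * Y)) * L = ((n:ℝ) • M - J) * L := by rw [key1]
    rw [smul_mul_assoc, Matrix.sub_mul, smul_mul_assoc, hJL, hML, sub_zero] at h
    exact smul_right_injective _ hnR h
  have mp2 : Y * L * Y = Y := by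
    have h : ((n:ℝ) • (Y * L)) * Y = ((n:ℝ) • N - J) * Y := by rw [key2]
    rw [smul_mul_assoc, Matrix.sub_mul, smul_mul_assoc, hJY, hNY, sub_zero] at h
    exact smul_right_injective _ hnR h
  have mp3 : (L * Y)ᵀ = L * Y := by
    have h : ((n:ℝ) • (L * Y))ᵀ = ((n:ℝ) • M - J)ᵀ := by rw [key1]
    rw [Matrix.transpose_smul, Matrix.transpose_sub, Matrix.transpose_smul, hd3, hJt,
      ← key1] at h
    exact smul_right_injective _ hnR h
  have mp4 : (Y * L)ᵀ = Y * L := by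
    have h : ((n:ℝ) • (Y * L))ᵀ = ((n:ℝ) • N - J)ᵀ := by rw [key2]
    rw [Matrix.transpose_smul, Matrix.transpose_sub, Matrix.transpose_smul, hd4, hJt,
      ← key2] at h
    exact smul_right_injective _ hnR h
  have hYLp : Y = Lp := mp_unique_s18 L Y Lp ⟨mp1, mp2, mp3, mp4⟩ hLp
  -- conclude
  rw [← hYLp, hY]
  have c4 : -(1/c) * (-c) = 1 := by field_simp
  have c5 : -(1/c) * (c/β) = -(1/β) := by field_simp
  rw [smul_add, smul_smul, smul_smul, c4, c5, one_smul, neg_smul]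
  abel
end
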